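/- arXiv:1703.09089 — 4 statements merged into one kernel-verified Lean document; each statement's English description precedes it below -/
import Mathlib

section
/- Let m ≥ 1, let y be a partition of [0,1] of size m, let λ > 0, and let f : [0,1] → [0,1] be continuous, strictly monotone on each interval I_j = [y(j−1), y(j)], mapping every partition point y(j) to a partition point, and satisfying |f(s) − f(t)| = λ·|s − t| for all s, t in the same interval I_j. Let N be the incidence matrix of f with respect to y, regarded as a real matrix, and let w ∈ ℝ^m be the vector of interval lengths, w_j = y(j) − y(j−1). Then Nᵀ w = λ w, i.e. for each j, the sum over i of N(i,j)·w_i equals λ·w_j. In particular λ is an eigenvalue of N, with positive eigenvector w of Nᵀ. -/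
open Set Matrix

/-- A partition of `[0,1]` of size `m`: a strictly increasing map
`{0,1,…,m} → ℝ` with first value `0` and last value `1`. -/
structure UnitPartition (m : ℕ) where
  pts : Fin (m + 1) → ℝ
  strictMono : StrictMono pts
  zero : pts 0 = 0
  one : pts (Fin.last m) = 1

/-- The `j`-th interval `I_j = [y(j-1), y(j)]` of a partition, for `j = 1, …, m`. -/
def UnitPartition.interval {m : ℕ} (y : UnitPartition m) (j : Fin m) : Set ℝ :=
  Set.Icc (y.pts j.castSucc) (y.pts j.succ)

/-- `f` is Markov for the partition `y`. -/
def IsMarkov {m : ℕ} (y : UnitPartition m) (f : ℝ → ℝ) : Prop :=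
  ∀ j : Fin m, ∃ a b : Fin (m + 1), a ≤ b ∧
    f '' y.interval j = Set.Icc (y.pts a) (y.pts b)

open Classical in
/-- The incidence matrix of `f` with respect to `y`, with natural-number entries:
`N i j = 1` if `I_i ⊆ f(I_j)` and `0` otherwise. -/
noncomputable def incidence {m : ℕ} (y : UnitPartition m) (f : ℝ → ℝ) :
    Matrix (Fin m) (Fin m) ℕ :=
  Matrix.of fun i j => if y.interval i ⊆ f '' y.interval j then 1 else 0

open Classical in
/-- The incidence matrix of `f` with respect to `y`, regarded as a real matrix. -/
noncomputable def incidenceR {m : ℕ} (y : UnitPartition m) (f : ℝ → ℝ) :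
    Matrix (Fin m) (Fin m) ℝ :=
  Matrix.of fun i j => if y.interval i ⊆ f '' y.interval j then 1 else 0

open Classical in
lemma UnitPartition.telescope {m : ℕ} (y : UnitPartition m) (p q : Fin (m + 1))
    (hpq : p ≤ q) :
    ∑ i : Fin m, (if p ≤ i.castSucc ∧ i.succ ≤ q then
        (y.pts i.succ - y.pts i.castSucc) else 0) = y.pts q - y.pts p := by
  classical
  set G : ℕ → ℝ := fun k => if h : k < m + 1 then y.pts ⟨k, h⟩ else 0 with hG
  have hGlt : ∀ k (h : k < m + 1), G k = y.pts ⟨k, h⟩ := fun k h => dif_pos h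
  set F : ℕ → ℝ := fun k => if (p : ℕ) ≤ k ∧ k + 1 ≤ (q : ℕ) then G (k + 1) - G k else 0 with hF
  have hstep : ∀ i : Fin m,
      (if p ≤ i.castSucc ∧ i.succ ≤ q then (y.pts i.succ - y.pts i.castSucc) else 0)
        = F (i : ℕ) := by
    intro i
    have h1 : G ((i : ℕ) + 1) = y.pts i.succ := by
      rw [hGlt _ (by omega)]; congr 1
    have h2 : G (i : ℕ) = y.pts i.castSucc := by
      rw [hGlt _ (by omega)]; congr 1
    have hc : (p ≤ i.castSucc ∧ i.succ ≤ q) ↔ ((p : ℕ) ≤ (i : ℕ) ∧ (i : ℕ) + 1 ≤ (q : ℕ)) := by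
      simp [Fin.le_def]
    simp only [hF, hc, h1, h2]
  rw [Finset.sum_congr rfl (fun i _ => hstep i), Fin.sum_univ_eq_sum_range F m]
  have hcond : ∀ k : ℕ, ((p : ℕ) ≤ k ∧ k + 1 ≤ (q : ℕ)) ↔ k ∈ Finset.Ico (p : ℕ) (q : ℕ) := by
    intro k; simp [Finset.mem_Ico]
  calc ∑ k ∈ Finset.range m, F k
      = ∑ k ∈ Finset.range m, (if k ∈ Finset.Ico (p : ℕ) (q : ℕ) then G (k + 1) - G k else 0) := by
        refine Finset.sum_congr rfl fun k _ => ?_; simp only [hF, hcond]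
    _ = ∑ k ∈ Finset.range m ∩ Finset.Ico (p : ℕ) (q : ℕ), (G (k + 1) - G k) :=
        Finset.sum_ite_mem _ _ _
    _ = ∑ k ∈ Finset.Ico (p : ℕ) (q : ℕ), (G (k + 1) - G k) := by
        congr 1
        refine Finset.inter_eq_right.mpr fun k hk => ?_
        rw [Finset.mem_Ico] at hk
        have := q.isLt
        exact Finset.mem_range.mpr (by omega)
    _ = y.pts q - y.pts p := by
        rw [Finset.sum_Ico_eq_sub _ hpq, Finset.sum_range_sub G, Finset.sum_range_sub G,
          hGlt _ q.isLt, hGlt _ p.isLt]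
        simp

lemma UnitPartition.image_eq {m : ℕ} (y : UnitPartition m) (lam : ℝ) (hlam : 0 < lam)
    (f : ℝ → ℝ)
    (hcont : ContinuousOn f (Set.Icc 0 1))
    (hmono : ∀ j : Fin m, StrictMonoOn f (y.interval j) ∨ StrictAntiOn f (y.interval j))
    (hpts : ∀ j : Fin (m + 1), ∃ k : Fin (m + 1), f (y.pts j) = y.pts k)
    (hlen : ∀ j : Fin m, ∀ s ∈ y.interval j, ∀ t ∈ y.interval j,
      |f s - f t| = lam * |s - t|) (j : Fin m) :
    ∃ p q : Fin (m + 1), p ≤ q ∧ f '' y.interval j = Set.Icc (y.pts p) (y.pts q) ∧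
      y.pts q - y.pts p = lam * (y.pts j.succ - y.pts j.castSucc) := by
  set a := j.castSucc with hadef
  set b := j.succ with hbdef
  have hab : y.pts a < y.pts b := y.strictMono (Fin.castSucc_lt_succ : j.castSucc < j.succ)
  have hma : y.pts a ∈ y.interval j := ⟨le_refl _, hab.le⟩
  have hmb : y.pts b ∈ y.interval j := ⟨hab.le, le_refl _⟩
  have hsub : y.interval j ⊆ Set.Icc 0 1 := by
    intro x hx
    constructor
    · calc (0 : ℝ) = y.pts 0 := y.zero.symm
        _ ≤ y.pts a := y.strictMono.monotone (Fin.zero_le _)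
        _ ≤ x := hx.1
    · calc x ≤ y.pts b := hx.2
        _ ≤ y.pts (Fin.last m) := y.strictMono.monotone (Fin.le_last _)
        _ = 1 := y.one
  have hc : ContinuousOn f (y.interval j) := hcont.mono hsub
  obtain ⟨p, hp⟩ := hpts a
  obtain ⟨q, hq⟩ := hpts b
  have hlen' : |f (y.pts b) - f (y.pts a)| = lam * (y.pts b - y.pts a) := by
    rw [hlen j _ hmb _ hma, abs_of_pos (sub_pos.mpr hab)]
  rcases hmono j with hmo | hmo
  · have hfab : f (y.pts a) < f (y.pts b) := hmo hma hmb hab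
    have himg : f '' y.interval j = Set.Icc (f (y.pts a)) (f (y.pts b)) := by
      apply Set.Subset.antisymm
      · rintro _ ⟨x, hx, rfl⟩
        exact ⟨hmo.monotoneOn hma hx hx.1, hmo.monotoneOn hx hmb hx.2⟩
      · exact intermediate_value_Icc hab.le hc
    refine ⟨p, q, ?_, ?_, ?_⟩
    · exact y.strictMono.le_iff_le.mp (by rw [← hp, ← hq]; exact hfab.le)
    · rw [himg, hp, hq]
    · rw [← hp, ← hq, ← abs_of_pos (sub_pos.mpr hfab), hlen']
  · have hfab : f (y.pts b) < f (y.pts a) := hmo hma hmb hab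
    have himg : f '' y.interval j = Set.Icc (f (y.pts b)) (f (y.pts a)) := by
      apply Set.Subset.antisymm
      · rintro _ ⟨x, hx, rfl⟩
        exact ⟨hmo.antitoneOn hx hmb hx.2, hmo.antitoneOn hma hx hx.1⟩
      · exact intermediate_value_Icc' hab.le hc
    refine ⟨q, p, ?_, ?_, ?_⟩
    · exact y.strictMono.le_iff_le.mp (by rw [← hp, ← hq]; exact hfab.le)
    · rw [himg, hp, hq]
    · rw [← hp, ← hq, ← abs_of_pos (sub_pos.mpr hfab), abs_sub_comm, hlen']

theorem lengths_eigenvector_of_uniform_expansion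
    (m : ℕ) (hm : 1 ≤ m) (y : UnitPartition m) (lam : ℝ) (hlam : 0 < lam)
    (f : ℝ → ℝ)
    (hmaps : Set.MapsTo f (Set.Icc 0 1) (Set.Icc 0 1))
    (hcont : ContinuousOn f (Set.Icc 0 1))
    (hmono : ∀ j : Fin m, StrictMonoOn f (y.interval j) ∨ StrictAntiOn f (y.interval j))
    (hpts : ∀ j : Fin (m + 1), ∃ k : Fin (m + 1), f (y.pts j) = y.pts k)
    (hlen : ∀ j : Fin m, ∀ s ∈ y.interval j, ∀ t ∈ y.interval j,
      |f s - f t| = lam * |s - t|) :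
    (∀ j : Fin m, ∑ i : Fin m, incidenceR y f i j * (y.pts i.succ - y.pts i.castSucc)
        = lam * (y.pts j.succ - y.pts j.castSucc)) ∧
    (incidenceR y f)ᵀ.mulVec (fun i => y.pts i.succ - y.pts i.castSucc)
        = lam • (fun j : Fin m => y.pts j.succ - y.pts j.castSucc) ∧
    (∀ i : Fin m, 0 < y.pts i.succ - y.pts i.castSucc) ∧
    Module.End.HasEigenvalue (Matrix.toLin' (incidenceR y f)) lam := by
  classical
  set w : Fin m → ℝ := fun i => y.pts i.succ - y.pts i.castSucc with hwdef
  have hwpos : ∀ i : Fin m, 0 < w i := fun i =>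
    sub_pos.mpr (y.strictMono (Fin.castSucc_lt_succ : i.castSucc < i.succ))
  have part1 : ∀ j : Fin m, ∑ i : Fin m, incidenceR y f i j * w i = lam * w j := by
    intro j
    obtain ⟨p, q, hpq, himg, hdiff⟩ :=
      y.image_eq lam hlam f hcont hmono hpts hlen j
    have hterm : ∀ i : Fin m, incidenceR y f i j * w i
        = if p ≤ i.castSucc ∧ i.succ ≤ q then (y.pts i.succ - y.pts i.castSucc) else 0 := by
      intro i
      have hiff : (y.interval i ⊆ f '' y.interval j) ↔ (p ≤ i.castSucc ∧ i.succ ≤ q) := by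
        rw [himg, UnitPartition.interval,
          Set.Icc_subset_Icc_iff (y.strictMono (Fin.castSucc_lt_succ : i.castSucc < i.succ)).le,
          y.strictMono.le_iff_le, y.strictMono.le_iff_le]
      simp only [incidenceR, Matrix.of_apply, hiff]
      split_ifs <;> simp [hwdef]
    rw [Finset.sum_congr rfl (fun i _ => hterm i), y.telescope p q hpq, hdiff]
  have part2 : (incidenceR y f)ᵀ.mulVec w = lam • w := by
    funext j
    show ∑ i : Fin m, (incidenceR y f)ᵀ j i * w i = lam * w j
    simpa [Matrix.transpose_apply] using part1 j
  refine ⟨part1, part2, hwpos, ?_⟩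
  set M := incidenceR y f with hM
  have h0 : (Mᵀ - lam • 1).mulVec w = 0 := by
    rw [Matrix.sub_mulVec, Matrix.smul_mulVec, Matrix.one_mulVec, part2, sub_self]
  have hwne : w ≠ 0 := fun h => (hwpos ⟨0, hm⟩).ne' (congrFun h ⟨0, hm⟩)
  have hdet : (Mᵀ - lam • 1).det = 0 := Matrix.exists_mulVec_eq_zero_iff.mp ⟨w, hwne, h0⟩
  have hdet2 : (M - lam • 1).det = 0 := by
    rw [← Matrix.det_transpose]
    simpa [Matrix.transpose_sub, Matrix.transpose_smul, Matrix.transpose_one] using hdet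
  obtain ⟨v, hv0, hv⟩ := Matrix.exists_mulVec_eq_zero_iff.mpr hdet2
  have hev : M.mulVec v = lam • v := by
    rw [Matrix.sub_mulVec, Matrix.smul_mulVec, Matrix.one_mulVec, sub_eq_zero] at hv
    exact hv
  exact Module.End.hasEigenvalue_of_hasEigenvector
    ⟨Module.End.mem_eigenspace_iff.mpr (by rw [Matrix.toLin'_apply]; exact hev), hv0⟩
end

section
/- Let m ≥ 1, let y be a partition of [0,1] of size m, let f : [0,1] → [0,1] be a continuous map which is Markov for y, and let N be the incidence matrix of f with respect to y, regarded as a matrix with natural-number entries. Then for every p ≥ 1 and all indices i, j: the (i,j) entry of N^p is positive if and only if I_i ⊆ f^p(I_j). -/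
open Set Matrix

namespace UnitPartition

variable {m : ℕ} (y : UnitPartition m)

lemma pts_mono : Monotone y.pts := y.strictMono.monotone

lemma pts_mem (i : Fin (m + 1)) : y.pts i ∈ Set.Icc (0 : ℝ) 1 := by
  constructor
  · rw [← y.zero]; exact y.pts_mono (Fin.zero_le i)
  · rw [← y.one]; exact y.pts_mono (Fin.le_last i)

lemma interval_subset_unit (j : Fin m) : y.interval j ⊆ Set.Icc 0 1 :=
  Set.Icc_subset_Icc (y.pts_mem j.castSucc).1 (y.pts_mem j.succ).2

lemma pts_lt (j : Fin m) : y.pts j.castSucc < y.pts j.succ :=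
  y.strictMono Fin.castSucc_lt_succ

lemma interval_nonempty (j : Fin m) : (y.interval j).Nonempty :=
  Set.nonempty_Icc.2 (y.pts_lt j).le

lemma left_mem_interval (j : Fin m) : y.pts j.castSucc ∈ y.interval j :=
  Set.left_mem_Icc.2 (y.pts_lt j).le

lemma right_mem_interval (j : Fin m) : y.pts j.succ ∈ y.interval j :=
  Set.right_mem_Icc.2 (y.pts_lt j).le

/-- Any point of `[y a, y b]` with `a < b` lies in some partition interval
contained in `[y a, y b]`. -/
lemma exists_interval_of_mem {a b : Fin (m + 1)} (hab : a < b) {x : ℝ}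
    (hx : x ∈ Set.Icc (y.pts a) (y.pts b)) :
    ∃ k : Fin m, a ≤ k.castSucc ∧ k.succ ≤ b ∧ x ∈ y.interval k := by
  classical
  set s : Finset (Fin (m + 1)) :=
    Finset.univ.filter (fun n => y.pts n ≤ x ∧ n < b) with hs
  have has : a ∈ s := by
    simp only [hs, Finset.mem_filter, Finset.mem_univ, true_and]
    exact ⟨hx.1, hab⟩
  have hne : s.Nonempty := ⟨a, has⟩
  set t := s.max' hne with ht
  have htmem : t ∈ s := s.max'_mem hne
  have htb : t < b := (Finset.mem_filter.1 htmem).2.2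
  have htx : y.pts t ≤ x := (Finset.mem_filter.1 htmem).2.1
  have hbm : (b : ℕ) ≤ m := Nat.lt_succ_iff.1 b.isLt
  have htm : (t : ℕ) < m := lt_of_lt_of_le htb hbm
  refine ⟨⟨t, htm⟩, ?_, ?_, ?_, ?_⟩
  · have h1 : a ≤ t := s.le_max' a has
    rw [show ((⟨t, htm⟩ : Fin m).castSucc) = t from Fin.ext rfl]
    exact h1
  · simp only [Fin.le_def, Fin.val_succ]
    exact htb
  · rw [show ((⟨t, htm⟩ : Fin m).castSucc) = t from Fin.ext rfl]
    exact htx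
  · -- x ≤ y.pts (succ k)
    by_contra h
    push_neg at h
    have hsucc_le : ((⟨t, htm⟩ : Fin m).succ : Fin (m + 1)) ≤ b := by
      simp only [Fin.le_def, Fin.val_succ]; exact htb
    rcases lt_or_eq_of_le hsucc_le with hlt | heq
    · have hmem : ((⟨t, htm⟩ : Fin m).succ : Fin (m + 1)) ∈ s := by
        simp only [hs, Finset.mem_filter, Finset.mem_univ, true_and]
        exact ⟨h.le, hlt⟩
      have := s.le_max' _ hmem
      rw [← ht] at this
      have : ((⟨t, htm⟩ : Fin m).succ : Fin (m + 1)).val ≤ (t : ℕ) := this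
      simp at this
    · have : y.pts b < x := heq ▸ h
      exact absurd hx.2 (not_le.2 this)

end UnitPartition

section Aux

variable {m : ℕ} {y : UnitPartition m} {f : ℝ → ℝ}

lemma incidence_pos_iff (i j : Fin m) :
    0 < incidence y f i j ↔ y.interval i ⊆ f '' y.interval j := by
  classical
  unfold incidence
  simp only [Matrix.of_apply]
  split_ifs with h <;> simp [h]

/-- The proper interval `I_i` is not contained in a subsingleton. -/
lemma interval_not_subset_subsingleton {s : Set ℝ} (hs : s.Subsingleton) (i : Fin m) :
    ¬ y.interval i ⊆ s := by
  intro h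
  have h1 := h (y.left_mem_interval i)
  have h2 := h (y.right_mem_interval i)
  exact absurd (hs h1 h2) (y.pts_lt i).ne

end Aux

theorem incidence_pow_pos_iff_subset
    (m : ℕ) (hm : 1 ≤ m) (y : UnitPartition m) (f : ℝ → ℝ)
    (hmaps : Set.MapsTo f (Set.Icc 0 1) (Set.Icc 0 1))
    (hcont : ContinuousOn f (Set.Icc 0 1))
    (hMarkov : IsMarkov y f) :
    ∀ p : ℕ, 1 ≤ p → ∀ i j : Fin m,
      0 < (incidence y f ^ p) i j ↔ y.interval i ⊆ f^[p] '' y.interval j := by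
  classical
  -- joint statement: structure of iterated images + the iff
  suffices H : ∀ p : ℕ, 1 ≤ p →
      ((∀ j : Fin m, (f^[p] '' y.interval j).Subsingleton ∨
        ∃ a b : Fin (m + 1), a < b ∧
          f^[p] '' y.interval j = Set.Icc (y.pts a) (y.pts b)) ∧
      (∀ i j : Fin m, 0 < (incidence y f ^ p) i j ↔
        y.interval i ⊆ f^[p] '' y.interval j)) by
    intro p hp i j
    exact (H p hp).2 i j
  intro p hp
  induction p, hp using Nat.le_induction with
  | base =>
    constructor
    · intro j
      obtain ⟨a, b, hab, him⟩ := hMarkov j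
      rcases eq_or_lt_of_le hab with heq | hlt
      · left
        rw [Function.iterate_one, him, ← heq]
        simp [Set.subsingleton_singleton]
      · right
        exact ⟨a, b, hlt, by rw [Function.iterate_one]; exact him⟩
    · intro i j
      rw [pow_one, Function.iterate_one]
      exact incidence_pos_iff i j
  | succ p hp ih =>
    obtain ⟨ihP, ihQ⟩ := ih
    -- basic continuity facts for iterates
    have hmapsp : Set.MapsTo f^[p] (Set.Icc 0 1) (Set.Icc 0 1) := hmaps.iterate p
    have hcontp : ContinuousOn f^[p] (Set.Icc 0 1) := hcont.iterate hmaps p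
    -- rewrite of the (p+1)-st image
    have himage : ∀ j : Fin m, f^[p + 1] '' y.interval j = f^[p] '' (f '' y.interval j) := by
      intro j
      rw [Function.iterate_succ, Set.image_comp]
    -- the forward direction of Q is uniform
    have Qfwd : ∀ i j : Fin m, 0 < (incidence y f ^ (p + 1)) i j →
        y.interval i ⊆ f^[p + 1] '' y.interval j := by
      intro i j hpos
      rw [pow_succ, Matrix.mul_apply] at hpos
      have : ∃ k, (incidence y f ^ p) i k * incidence y f k j ≠ 0 := by
        by_contra h
        push_neg at h
        rw [Finset.sum_eq_zero (fun k _ => h k)] at hpos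
        exact lt_irrefl 0 hpos
      obtain ⟨k, hk⟩ := this
      rcases Nat.mul_ne_zero_iff.1 hk with ⟨h1, h2⟩
      have hik : y.interval i ⊆ f^[p] '' y.interval k := (ihQ i k).1 (Nat.pos_of_ne_zero h1)
      have hkj : y.interval k ⊆ f '' y.interval j := (incidence_pos_iff k j).1 (Nat.pos_of_ne_zero h2)
      rw [himage j]
      exact hik.trans (Set.image_mono hkj)
    -- the backward direction of Q
    have Qbwd : ∀ i j : Fin m, y.interval i ⊆ f^[p + 1] '' y.interval j →
        0 < (incidence y f ^ (p + 1)) i j := by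
      intro i j hsub
      obtain ⟨a, b, hab, him⟩ := hMarkov j
      rw [himage j, him] at hsub
      rcases eq_or_lt_of_le hab with heq | hlt
      · -- degenerate: image is a singleton, contradiction
        exfalso
        rw [← heq] at hsub
        rw [Set.Icc_self, Set.image_singleton] at hsub
        exact interval_not_subset_subsingleton (Set.subsingleton_singleton) i hsub
      -- nondegenerate
      -- the union of degenerate pieces is finite
      have hFfin : (⋃ k ∈ Finset.univ.filter
          (fun k : Fin m => (f^[p] '' y.interval k).Subsingleton),
          f^[p] '' y.interval k).Finite := by
        apply Set.Finite.biUnion (Finset.finite_toSet _)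
        intro k hk
        simp only [Finset.coe_filter, Set.mem_setOf_eq] at hk
        exact hk.2.finite
      have hIooInf : (Set.Ioo (y.pts i.castSucc) (y.pts i.succ)).Infinite :=
        Set.Ioo_infinite (y.pts_lt i)
      obtain ⟨x, hxIoo, hxF⟩ := (hIooInf.diff hFfin).nonempty
      have hxI : x ∈ y.interval i := Set.Ioo_subset_Icc_self hxIoo
      obtain ⟨z, hz, hfz⟩ := hsub hxI
      obtain ⟨k, hak, hkb, hzk⟩ := y.exists_interval_of_mem hlt hz
      have hxk : x ∈ f^[p] '' y.interval k := ⟨z, hzk, hfz⟩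
      -- k is nondegenerate
      have hknd : ¬ (f^[p] '' y.interval k).Subsingleton := by
        intro hss
        apply hxF
        exact Set.mem_biUnion (Finset.mem_filter.2 ⟨Finset.mem_univ k, hss⟩) hxk
      obtain ⟨u, v, huv, hpk⟩ := (ihP k).resolve_left hknd
      rw [hpk] at hxk
      -- deduce I_i ⊆ [y u, y v]
      have hu : y.pts u ≤ y.pts i.castSucc := by
        by_contra h
        push_neg at h
        have : i.succ ≤ u := by
          have : i.castSucc < u := y.strictMono.lt_iff_lt.1 h
          rw [Fin.lt_def, Fin.coe_castSucc] at this
          rw [Fin.le_def, Fin.val_succ]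
          omega
        have := y.pts_mono this
        have := hxk.1
        have := hxIoo.2
        linarith
      have hv : y.pts i.succ ≤ y.pts v := by
        by_contra h
        push_neg at h
        have : v ≤ i.castSucc := by
          have : v < i.succ := y.strictMono.lt_iff_lt.1 h
          rw [Fin.lt_def, Fin.val_succ] at this
          rw [Fin.le_def, Fin.coe_castSucc]
          omega
        have := y.pts_mono this
        have := hxk.2
        have := hxIoo.1
        linarith
      have hik : y.interval i ⊆ f^[p] '' y.interval k := by
        rw [hpk]
        exact Set.Icc_subset_Icc hu hv
      have hkj : y.interval k ⊆ f '' y.interval j := by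
        rw [him]
        exact Set.Icc_subset_Icc (y.pts_mono hak) (y.pts_mono hkb)
      have h1 : 0 < (incidence y f ^ p) i k := (ihQ i k).2 hik
      have h2 : 0 < incidence y f k j := (incidence_pos_iff k j).2 hkj
      rw [pow_succ, Matrix.mul_apply]
      calc 0 < (incidence y f ^ p) i k * incidence y f k j := Nat.mul_pos h1 h2
        _ ≤ ∑ k', (incidence y f ^ p) i k' * incidence y f k' j :=
          Finset.single_le_sum (f := fun k' => (incidence y f ^ p) i k' * incidence y f k' j)
            (fun _ _ => Nat.zero_le _) (Finset.mem_univ k)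
    refine ⟨?_, fun i j => ⟨Qfwd i j, Qbwd i j⟩⟩
    -- structure of the (p+1)-st image
    intro j
    obtain ⟨a, b, hab, him⟩ := hMarkov j
    rcases eq_or_lt_of_le hab with heq | hlt
    · left
      rw [himage j, him, ← heq, Set.Icc_self, Set.image_singleton]
      exact Set.subsingleton_singleton
    · -- nondegenerate
      set E := f^[p + 1] '' y.interval j with hE
      have hEeq : E = f^[p] '' Set.Icc (y.pts a) (y.pts b) := by
        rw [hE, himage j, him]
      have hsub01 : Set.Icc (y.pts a) (y.pts b) ⊆ Set.Icc (0 : ℝ) 1 :=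
        Set.Icc_subset_Icc (y.pts_mem a).1 (y.pts_mem b).2
      have hcomp : IsCompact E := by
        rw [hEeq]
        exact isCompact_Icc.image_of_continuousOn (hcontp.mono hsub01)
      have hconn : IsConnected E := by
        rw [hEeq]
        exact ⟨(Set.nonempty_Icc.2 (y.pts_mono hlt.le)).image _,
          isPreconnected_Icc.image _ (hcontp.mono hsub01)⟩
      have hEIcc : E = Set.Icc (sInf E) (sSup E) := eq_Icc_of_connected_compact hconn hcomp
      by_cases hcd : sInf E < sSup E
      swap
      · left
        intro x hx x' hx'
        rw [hEIcc] at hx hx'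
        push_neg at hcd
        have := hx.1; have := hx.2; have := hx'.1; have := hx'.2
        linarith
      · right
        -- pieces contained in E
        have hpiece : ∀ k : Fin m, a ≤ k.castSucc → k.succ ≤ b →
            f^[p] '' y.interval k ⊆ E := by
          intro k h1 h2
          rw [hEeq]
          exact Set.image_mono (Set.Icc_subset_Icc (y.pts_mono h1) (y.pts_mono h2))
        -- set of good (nondegenerate, in-range) indices
        set G : Finset (Fin m) := Finset.univ.filter
          (fun k : Fin m => a ≤ k.castSucc ∧ k.succ ≤ b ∧
            ¬ (f^[p] '' y.interval k).Subsingleton) with hG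
        -- finite union of degenerate pieces
        have hFfin : (⋃ k ∈ Finset.univ.filter
            (fun k : Fin m => (f^[p] '' y.interval k).Subsingleton),
            f^[p] '' y.interval k).Finite := by
          apply Set.Finite.biUnion (Finset.finite_toSet _)
          intro k hk
          simp only [Finset.coe_filter, Set.mem_setOf_eq] at hk
          exact hk.2.finite
        -- from an infinite subinterval of E, find a good index
        have hfind : ∀ c' d' : ℝ, c' < d' → Set.Ioo c' d' ⊆ E →
            ∃ k ∈ G, ∃ x ∈ Set.Ioo c' d', x ∈ f^[p] '' y.interval k := by
          intro c' d' hcd' hss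
          obtain ⟨x, hxIoo, hxF⟩ := ((Set.Ioo_infinite hcd').diff hFfin).nonempty
          have hxE : x ∈ E := hss hxIoo
          rw [hEeq] at hxE
          obtain ⟨z, hz, hfz⟩ := hxE
          obtain ⟨k, hak, hkb, hzk⟩ := y.exists_interval_of_mem hlt hz
          have hxk : x ∈ f^[p] '' y.interval k := ⟨z, hzk, hfz⟩
          have hknd : ¬ (f^[p] '' y.interval k).Subsingleton := by
            intro hss'
            exact hxF (Set.mem_biUnion (Finset.mem_filter.2 ⟨Finset.mem_univ k, hss'⟩) hxk)
          refine ⟨k, ?_, x, hxIoo, hxk⟩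
          simp only [hG, Finset.mem_filter, Finset.mem_univ, true_and]
          exact ⟨hak, hkb, hknd⟩
        have hIooE : Set.Ioo (sInf E) (sSup E) ⊆ E :=
          Set.Ioo_subset_Icc_self.trans hEIcc.superset
        obtain ⟨k₀, hk₀G, x₀, hx₀, hx₀k⟩ := hfind _ _ hcd hIooE
        have hGne : G.Nonempty := ⟨k₀, hk₀G⟩
        -- every good piece is an Icc with partition endpoints contained in E
        have hgood : ∀ k ∈ G, ∃ u v : Fin (m + 1), u < v ∧
            f^[p] '' y.interval k = Set.Icc (y.pts u) (y.pts v) ∧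
            f^[p] '' y.interval k ⊆ E := by
          intro k hk
          simp only [hG, Finset.mem_filter, Finset.mem_univ, true_and] at hk
          obtain ⟨hak, hkb, hknd⟩ := hk
          obtain ⟨u, v, huv, hpk⟩ := (ihP k).resolve_left hknd
          exact ⟨u, v, huv, hpk, hpiece k hak hkb⟩
        -- the infimum of E is a partition point
        have hinfE : ∃ u : Fin (m + 1), sInf E = y.pts u := by
          by_contra h
          push_neg at h
          have hlt' : ∀ k ∈ G, sInf E < sInf (f^[p] '' y.interval k) := by
            intro k hk
            obtain ⟨u, v, huv, hpk, hsubE⟩ := hgood k hk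
            rw [hpk, csInf_Icc (y.pts_mono huv.le)]
            refine lt_of_le_of_ne ?_ (h u)
            exact csInf_le hcomp.bddBelow
              (hsubE (by rw [hpk]; exact Set.left_mem_Icc.2 (y.pts_mono huv.le)))
          set c₁ := G.inf' hGne (fun k => sInf (f^[p] '' y.interval k)) with hc₁
          have hcc₁ : sInf E < c₁ := (Finset.lt_inf'_iff hGne).2 hlt'
          have hc₁d : c₁ ≤ sSup E := by
            obtain ⟨k, hk, hkeq⟩ := Finset.exists_mem_eq_inf' hGne
              (fun k => sInf (f^[p] '' y.interval k))
            obtain ⟨u, v, huv, hpk, hsubE⟩ := hgood k hk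
            rw [hc₁, hkeq, hpk, csInf_Icc (y.pts_mono huv.le)]
            exact le_csSup hcomp.bddAbove
              (hsubE (by rw [hpk]; exact Set.left_mem_Icc.2 (y.pts_mono huv.le)))
          obtain ⟨k, hk, x, hx, hxk⟩ := hfind (sInf E) c₁ hcc₁
            (fun x hx => hEIcc.superset ⟨hx.1.le, hx.2.le.trans hc₁d⟩)
          have h1 : c₁ ≤ sInf (f^[p] '' y.interval k) :=
            Finset.inf'_le (fun k => sInf (f^[p] '' y.interval k)) hk
          obtain ⟨u, v, huv, hpk, _⟩ := hgood k hk
          rw [hpk, csInf_Icc (y.pts_mono huv.le)] at h1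
          rw [hpk] at hxk
          exact absurd (h1.trans hxk.1) (not_le.2 hx.2)
        -- the supremum of E is a partition point
        have hsupE : ∃ v : Fin (m + 1), sSup E = y.pts v := by
          by_contra h
          push_neg at h
          have hlt' : ∀ k ∈ G, sSup (f^[p] '' y.interval k) < sSup E := by
            intro k hk
            obtain ⟨u, v, huv, hpk, hsubE⟩ := hgood k hk
            rw [hpk, csSup_Icc (y.pts_mono huv.le)]
            refine lt_of_le_of_ne ?_ (fun heq => h v heq.symm)
            exact le_csSup hcomp.bddAbove
              (hsubE (by rw [hpk]; exact Set.right_mem_Icc.2 (y.pts_mono huv.le)))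
          set d₁ := G.sup' hGne (fun k => sSup (f^[p] '' y.interval k)) with hd₁
          have hdd₁ : d₁ < sSup E := (Finset.sup'_lt_iff hGne).2 hlt'
          have hd₁c : sInf E ≤ d₁ := by
            obtain ⟨k, hk, hkeq⟩ := Finset.exists_mem_eq_sup' hGne
              (fun k => sSup (f^[p] '' y.interval k))
            obtain ⟨u, v, huv, hpk, hsubE⟩ := hgood k hk
            rw [hd₁, hkeq, hpk, csSup_Icc (y.pts_mono huv.le)]
            exact csInf_le hcomp.bddBelow
              (hsubE (by rw [hpk]; exact Set.right_mem_Icc.2 (y.pts_mono huv.le)))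
          obtain ⟨k, hk, x, hx, hxk⟩ := hfind d₁ (sSup E) hdd₁
            (fun x hx => hEIcc.superset ⟨hd₁c.trans hx.1.le, hx.2.le⟩)
          have h1 : sSup (f^[p] '' y.interval k) ≤ d₁ :=
            Finset.le_sup' (fun k => sSup (f^[p] '' y.interval k)) hk
          obtain ⟨u, v, huv, hpk, _⟩ := hgood k hk
          rw [hpk, csSup_Icc (y.pts_mono huv.le)] at h1
          rw [hpk] at hxk
          exact absurd (hxk.2.trans h1) (not_le.2 hx.1)
        obtain ⟨u, hu⟩ := hinfE
        obtain ⟨v, hv⟩ := hsupE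
        refine ⟨u, v, ?_, ?_⟩
        · exact y.strictMono.lt_iff_lt.1 (hu ▸ hv ▸ hcd)
        · rw [hEIcc, hu, hv]
end

section
/- Let m ≥ 1, let y be a partition of [0,1] of size m, let f : [0,1] → [0,1] be a continuous map which is Markov for y, and suppose that for every j = 1,…,m there exists p_j ≥ 1 with f^{p_j}(I_j) = [0,1]. Then the incidence matrix N of f with respect to y is aperiodic (primitive): there exists p ≥ 1 such that every entry of N^p is positive. -/
open Set Matrix

/-! ### Auxiliary lemmas -/

lemma incidence_ne_zero_iff {m : ℕ} (y : UnitPartition m) (f : ℝ → ℝ) (i j : Fin m) :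
    incidence y f i j ≠ 0 ↔ y.interval i ⊆ f '' y.interval j := by
  classical
  simp only [incidence, Matrix.of_apply]
  split_ifs with h <;> simp [h]

lemma UnitPartition.interval_subset {m : ℕ} (y : UnitPartition m) (j : Fin m) :
    y.interval j ⊆ Set.Icc (0 : ℝ) 1 := by
  intro x hx
  constructor
  · calc (0 : ℝ) = y.pts 0 := y.zero.symm
      _ ≤ y.pts j.castSucc := y.strictMono.monotone (Fin.zero_le _)
      _ ≤ x := hx.1
  · calc x ≤ y.pts j.succ := hx.2
      _ ≤ y.pts (Fin.last m) := y.strictMono.monotone (Fin.le_last _)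
      _ = 1 := y.one

lemma UnitPartition.interval_nonempty_s5 {m : ℕ} (y : UnitPartition m) (j : Fin m) :
    (y.interval j).Nonempty :=
  Set.nonempty_Icc.2 (y.strictMono (Fin.castSucc_lt_succ : j.castSucc < j.succ)).le

/-- Covering lemma: any point of `[pts a, pts b]` (with `a < b`) lies in some subinterval
`I_k` with `a ≤ k.castSucc` and `k.succ ≤ b`. -/
lemma UnitPartition.cover {m : ℕ} (y : UnitPartition m) {a b : Fin (m + 1)} (hab : a < b)
    {x : ℝ} (hx : x ∈ Set.Icc (y.pts a) (y.pts b)) :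
    ∃ k : Fin m, a ≤ k.castSucc ∧ k.succ ≤ b ∧ x ∈ y.interval k := by
  classical
  set S : Finset (Fin (m + 1)) :=
    Finset.univ.filter (fun c => a ≤ c ∧ c < b ∧ y.pts c ≤ x) with hS
  have hane : a ∈ S := by simp [hS, le_refl, hab, hx.1]
  have hne : S.Nonempty := ⟨a, hane⟩
  set c := S.max' hne with hc
  have hcS : c ∈ S := S.max'_mem hne
  rw [hS, Finset.mem_filter] at hcS
  obtain ⟨-, hac, hcb, hpc⟩ := hcS
  have hcb' : c.val < b.val := hcb
  have hcm : c.val < m := by have := b.isLt; omega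
  refine ⟨⟨c.val, hcm⟩, ?_, ?_, ?_, ?_⟩
  · have : (Fin.castSucc ⟨c.val, hcm⟩ : Fin (m + 1)) = c := by ext; simp
    rw [this]; exact hac
  · rw [Fin.le_iff_val_le_val, Fin.val_succ]; exact hcb'
  · have : (Fin.castSucc ⟨c.val, hcm⟩ : Fin (m + 1)) = c := by ext; simp
    rw [this]; exact hpc
  · set k : Fin m := ⟨c.val, hcm⟩ with hk
    have hksv : (k.succ : Fin (m + 1)).val = c.val + 1 := by simp [hk]
    have hac' : a.val ≤ c.val := hac
    by_cases hkb : k.succ = b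
    · rw [hkb]; exact hx.2
    · have hkb' : k.succ < b :=
        lt_of_le_of_ne (by rw [Fin.le_iff_val_le_val, hksv]; exact hcb') hkb
      by_contra h
      push_neg at h
      have hmem : k.succ ∈ S := by
        rw [hS, Finset.mem_filter]
        refine ⟨Finset.mem_univ _, ?_, hkb', h.le⟩
        rw [Fin.le_iff_val_le_val, hksv]; omega
      have := S.le_max' _ hmem
      rw [← hc, Fin.le_iff_val_le_val, hksv] at this
      omega

lemma UnitPartition.eq_of_mem_interior {m : ℕ} (y : UnitPartition m) {i k : Fin m} {x : ℝ}
    (h1 : y.pts i.castSucc < x) (h2 : x < y.pts i.succ) (hk : x ∈ y.interval k) : k = i := by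
  have ha : k.castSucc < i.succ := y.strictMono.lt_iff_lt.1 (lt_of_le_of_lt hk.1 h2)
  have hb : i.castSucc < k.succ := y.strictMono.lt_iff_lt.1 (lt_of_lt_of_le h1 hk.2)
  have ha' : (k.castSucc : Fin (m + 1)).val < (i.succ : Fin (m + 1)).val := ha
  have hb' : (i.castSucc : Fin (m + 1)).val < (k.succ : Fin (m + 1)).val := hb
  simp only [Fin.coe_castSucc, Fin.val_succ] at ha' hb'
  ext; omega

lemma UnitPartition.interval_subset_Icc {m : ℕ} (y : UnitPartition m) {k : Fin m}
    {a b : Fin (m + 1)} (h1 : a ≤ k.castSucc) (h2 : k.succ ≤ b) :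
    y.interval k ⊆ Set.Icc (y.pts a) (y.pts b) :=
  Set.Icc_subset_Icc (y.strictMono.monotone h1) (y.strictMono.monotone h2)

/-- The key countability lemma: the image `f^[p](I_j)` is covered, up to a countable set,
by the union of intervals `I_k` with `(N^p) k j ≠ 0`. -/
lemma iterate_image_subset {m : ℕ} (y : UnitPartition m) (f : ℝ → ℝ)
    (hMarkov : IsMarkov y f) (p : ℕ) :
    ∀ j : Fin m, ∃ s : Set ℝ, s.Countable ∧
      f^[p] '' y.interval j ⊆
        s ∪ ⋃ k ∈ {k : Fin m | (incidence y f ^ p) k j ≠ 0}, y.interval k := by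
  induction p with
  | zero =>
    intro j
    refine ⟨∅, Set.countable_empty, ?_⟩
    intro x hx
    simp only [Function.iterate_zero, Set.image_id] at hx
    right
    refine Set.mem_biUnion ?_ hx
    simp [Matrix.one_apply_eq]
  | succ p IH =>
    intro j
    obtain ⟨a, b, hab, himg⟩ := hMarkov j
    have hiter : f^[p + 1] '' y.interval j = f^[p] '' (f '' y.interval j) := by
      rw [Function.iterate_succ, Set.image_comp]
    rcases eq_or_lt_of_le hab with rfl | hab'
    · -- degenerate: image is a single point
      refine ⟨f^[p + 1] '' y.interval j, ?_, Set.subset_union_left⟩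
      rw [hiter, himg, Set.Icc_self, Set.image_singleton]
      exact Set.countable_singleton _
    · choose S hSc hSsub using IH
      refine ⟨⋃ k, S k, Set.countable_iUnion hSc, ?_⟩
      intro x hx
      rw [hiter] at hx
      obtain ⟨u, hu, rfl⟩ := hx
      rw [himg] at hu
      obtain ⟨k, hka, hkb, huk⟩ := y.cover hab' hu
      have hNkj : incidence y f k j ≠ 0 := by
        rw [incidence_ne_zero_iff, himg]
        exact y.interval_subset_Icc hka hkb
      have hxk : f^[p] u ∈ f^[p] '' y.interval k := Set.mem_image_of_mem _ huk
      rcases hSsub k hxk with h | h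
      · exact Or.inl (Set.mem_iUnion.2 ⟨k, h⟩)
      · obtain ⟨k', hk', hxk'⟩ := Set.mem_iUnion₂.1 h
        refine Or.inr (Set.mem_biUnion ?_ hxk')
        simp only [Set.mem_setOf_eq] at hk' ⊢
        have hpos : 0 < (incidence y f ^ (p + 1)) k' j := by
          rw [pow_succ, Matrix.mul_apply]
          exact Finset.sum_pos' (fun _ _ => Nat.zero_le _)
            ⟨k, Finset.mem_univ k,
              Nat.pos_of_ne_zero (mul_ne_zero hk' hNkj)⟩
        exact hpos.ne'

lemma Ioo_not_subset_countable {a b : ℝ} (hab : a < b) {s : Set ℝ} (hs : s.Countable) :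
    ¬ Set.Ioo a b ⊆ s := by
  intro h
  have : (Set.Ioo a b).Countable := hs.mono h
  rw [Set.countable_coe_iff.symm, ← Cardinal.mk_le_aleph0_iff] at this
  rw [Cardinal.mk_Ioo_real hab] at this
  exact absurd this (Cardinal.aleph0_lt_continuum).not_ge

theorem incidence_aperiodic_of_eventually_onto
    (m : ℕ) (hm : 1 ≤ m) (y : UnitPartition m) (f : ℝ → ℝ)
    (hmaps : Set.MapsTo f (Set.Icc 0 1) (Set.Icc 0 1))
    (hcont : ContinuousOn f (Set.Icc 0 1))
    (hMarkov : IsMarkov y f)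
    (honto : ∀ j : Fin m, ∃ p : ℕ, 1 ≤ p ∧ f^[p] '' y.interval j = Set.Icc (0 : ℝ) 1) :
    ∃ p : ℕ, 1 ≤ p ∧ ∀ i j : Fin m, 0 < (incidence y f ^ p) i j := by
  classical
  choose P hP1 hP2 using honto
  set N := incidence y f with hN
  have hIcc01 : Set.Icc (0 : ℝ) 1 = Set.Icc (y.pts 0) (y.pts (Fin.last m)) := by
    rw [y.zero, y.one]
  have h0last : (0 : Fin (m + 1)) < Fin.last m := by
    rw [Fin.lt_iff_val_lt_val]; simp; omega
  -- columns become positive at time P j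
  have colpos : ∀ j i : Fin m, 0 < (N ^ P j) i j := by
    intro j i
    obtain ⟨s, hsc, hsub⟩ := iterate_image_subset y f hMarkov (P j) j
    have hlt : y.pts i.castSucc < y.pts i.succ := y.strictMono (Fin.castSucc_lt_succ : i.castSucc < i.succ)
    obtain ⟨x, hxIoo, hxs⟩ := Set.not_subset.1 (Ioo_not_subset_countable hlt hsc)
    have hxI : x ∈ y.interval i := Set.Ioo_subset_Icc_self hxIoo
    have hx01 : x ∈ Set.Icc (0 : ℝ) 1 := y.interval_subset i hxI
    rw [← hP2 j] at hx01
    rcases hsub hx01 with h | h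
    · exact absurd h hxs
    · obtain ⟨k, hk, hxk⟩ := Set.mem_iUnion₂.1 h
      have : k = i := y.eq_of_mem_interior hxIoo.1 hxIoo.2 hxk
      subst this
      exact Nat.pos_of_ne_zero hk
  -- f maps [0,1] onto [0,1]
  have j0 : Fin m := ⟨0, hm⟩
  have hsurj : Set.Icc (0 : ℝ) 1 ⊆ f '' Set.Icc (0 : ℝ) 1 := by
    obtain ⟨q, hq⟩ := Nat.exists_eq_add_of_le (hP1 j0)
    have : f^[P j0] '' y.interval j0 = f '' (f^[q] '' y.interval j0) := by
      rw [hq, add_comm, Function.iterate_succ', Set.image_comp]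
    rw [hP2 j0] at this
    calc Set.Icc (0 : ℝ) 1 = f '' (f^[q] '' y.interval j0) := this
      _ ⊆ f '' Set.Icc (0 : ℝ) 1 := Set.image_mono (by
          calc f^[q] '' y.interval j0 ⊆ f^[q] '' Set.Icc (0 : ℝ) 1 :=
                Set.image_mono (y.interval_subset j0)
            _ ⊆ Set.Icc (0 : ℝ) 1 := (hmaps.iterate q).image_subset)
  -- every row of N has a nonzero entry
  have hrow : ∀ i : Fin m, ∃ k : Fin m, N i k ≠ 0 := by
    intro i
    have hlt : y.pts i.castSucc < y.pts i.succ := y.strictMono (Fin.castSucc_lt_succ : i.castSucc < i.succ)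
    obtain ⟨x, hx1, hx2⟩ := Set.nonempty_Ioo.2 hlt
    have hxI : x ∈ y.interval i := Set.Ioo_subset_Icc_self ⟨hx1, hx2⟩
    obtain ⟨t, ht, hft⟩ := hsurj (y.interval_subset i hxI)
    rw [hIcc01] at ht
    obtain ⟨k, -, -, htk⟩ := y.cover h0last ht
    obtain ⟨a, b, -, himg⟩ := hMarkov k
    have hxim : x ∈ Set.Icc (y.pts a) (y.pts b) := by
      rw [← himg]; exact ⟨t, htk, hft⟩
    have ha : a ≤ i.castSucc := by
      have : y.pts a < y.pts i.succ := lt_of_le_of_lt hxim.1 hx2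
      have := y.strictMono.lt_iff_lt.1 this
      rw [Fin.lt_iff_val_lt_val, Fin.val_succ] at this
      rw [Fin.le_iff_val_le_val, Fin.coe_castSucc]; omega
    have hb : i.succ ≤ b := by
      have : y.pts i.castSucc < y.pts b := lt_of_lt_of_le hx1 hxim.2
      have := y.strictMono.lt_iff_lt.1 this
      rw [Fin.lt_iff_val_lt_val, Fin.coe_castSucc] at this
      rw [Fin.le_iff_val_le_val, Fin.val_succ]; omega
    refine ⟨k, ?_⟩
    rw [hN, incidence_ne_zero_iff, himg]
    exact y.interval_subset_Icc ha hb
  -- positivity propagates forward in time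
  have hstep : ∀ (q : ℕ) (j : Fin m), (∀ i, 0 < (N ^ q) i j) → ∀ i, 0 < (N ^ (q + 1)) i j := by
    intro q j hq i
    obtain ⟨k, hk⟩ := hrow i
    rw [pow_succ', Matrix.mul_apply]
    exact Finset.sum_pos' (fun _ _ => Nat.zero_le _)
      ⟨k, Finset.mem_univ k, Nat.mul_pos (Nat.pos_of_ne_zero hk) (hq k)⟩
  set p := Finset.univ.sup P with hp
  refine ⟨p, le_trans (hP1 j0) (Finset.le_sup (Finset.mem_univ j0)), ?_⟩
  intro i j
  have key : ∀ d : ℕ, ∀ i, 0 < (N ^ (P j + d)) i j := by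
    intro d
    induction d with
    | zero => exact colpos j
    | succ d IH => exact hstep (P j + d) j IH
  obtain ⟨d, hd⟩ := Nat.exists_eq_add_of_le (Finset.le_sup (f := P) (Finset.mem_univ j))
  rw [hp, hd]
  exact key d i
end

section
/- Let x be a partition of [0,1] of size n and y a partition of [0,1] of size m refining x, i.e. every point x(k) is some point y(j). Let f : [0,1] → [0,1] be continuous and suppose that for each j = 1,…,m, the image f(I_j) of the refined interval I_j = [y(j−1), y(j)] equals [x(a_j), x(b_j)] for some indices a_j ≤ b_j (the image endpoints lie in the coarse partition). Let N be the incidence matrix of f with respect to y. If two distinct refined intervals I_i and I_{i'} are both contained in a single coarse interval [x(k−1), x(k)], then the i-th and i'-th rows of N are equal; in particular det N = 0, so N is singular. -/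
open Set Matrix

theorem incidence_singular_of_refinement
    (n m : ℕ) (hn : 1 ≤ n) (hm : 1 ≤ m)
    (x : UnitPartition n) (y : UnitPartition m)
    (hrefine : ∀ k : Fin (n + 1), ∃ j : Fin (m + 1), x.pts k = y.pts j)
    (f : ℝ → ℝ)
    (hmaps : Set.MapsTo f (Set.Icc 0 1) (Set.Icc 0 1))
    (hcont : ContinuousOn f (Set.Icc 0 1))
    (himg : ∀ j : Fin m, ∃ a b : Fin (n + 1), a ≤ b ∧
      f '' y.interval j = Set.Icc (x.pts a) (x.pts b))
    (i i' : Fin m) (hne : i ≠ i') (k : Fin n)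
    (hi : y.interval i ⊆ x.interval k) (hi' : y.interval i' ⊆ x.interval k) :
    (∀ j : Fin m, incidenceR y f i j = incidenceR y f i' j) ∧
    (incidenceR y f).det = 0 := by
  have key : ∀ j : Fin m, (y.interval i ⊆ f '' y.interval j) ↔
      (y.interval i' ⊆ f '' y.interval j) := by
    intro j
    obtain ⟨a, b, hab, him⟩ := himg j
    rw [him]
    have main : ∀ ii : Fin m, y.interval ii ⊆ x.interval k →
        (y.interval ii ⊆ Set.Icc (x.pts a) (x.pts b) ↔
          x.interval k ⊆ Set.Icc (x.pts a) (x.pts b)) := by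
      intro ii hsub
      constructor
      · intro h
        have hlt : y.pts ii.castSucc < y.pts ii.succ :=
          y.strictMono (Fin.castSucc_lt_succ : ii.castSucc < ii.succ)
        have h1 := (Set.Icc_subset_Icc_iff hlt.le).mp h
        have h2 := (Set.Icc_subset_Icc_iff hlt.le).mp hsub
        apply Set.Icc_subset_Icc
        · by_contra hc
          push_neg at hc
          have h3 : k.castSucc < a := x.strictMono.lt_iff_lt.mp hc
          have h4 : k.succ ≤ a := Fin.castSucc_lt_iff_succ_le.mp h3
          have hxa : x.pts k.succ ≤ x.pts a := x.strictMono.monotone h4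
          linarith [h1.1, h1.2, h2.2, hlt]
        · by_contra hc
          push_neg at hc
          have h3 : b < k.succ := x.strictMono.lt_iff_lt.mp hc
          have h4 : b ≤ k.castSucc := Fin.le_castSucc_iff.mpr h3
          have hxb : x.pts b ≤ x.pts k.castSucc := x.strictMono.monotone h4
          linarith [h1.1, h1.2, h2.1, hlt]
      · intro h; exact hsub.trans h
    rw [main i hi, main i' hi']
  have hrow : ∀ j : Fin m, incidenceR y f i j = incidenceR y f i' j := by
    intro j
    simp only [incidenceR, Matrix.of_apply]
    by_cases h : y.interval i ⊆ f '' y.interval j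
    · rw [if_pos h, if_pos ((key j).mp h)]
    · rw [if_neg h, if_neg (fun h' => h ((key j).mpr h'))]
  exact ⟨hrow, Matrix.det_zero_of_row_eq hne (funext hrow)⟩
end
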